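/- arXiv:1406.4718 — 4 statements merged into one kernel-verified Lean document; each statement's English description precedes it below -/
import Mathlib

section
/- Let G be a finite simple graph and ≤ an elimination order to degree d for G of d-height at most k, and let A be the set of vertices of G that are not ≤-maximal. Then: (1) the restriction of ≤ to A is an elimination order of the induced subgraph G[A], of height at most k; (2) the induced subgraph of G on V(G) ∖ A has maximum degree at most d; and (3) for every connected component of the induced subgraph on V(G) ∖ A with vertex set C, and all ≤-incomparable u, v ∈ A, at least one of E_G(u, C) and E_G(v, C) is empty. -/
open SimpleGraph Set

variable {V : Type*}

/-- The degree of a vertex: the number of its neighbours. -/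
noncomputable def gdeg (G : SimpleGraph V) (v : V) : ℕ := (G.neighborSet v).ncard

/-- The degree of `v` inside the vertex set `A`, i.e. its degree in the induced subgraph. -/
noncomputable def degreeIn (G : SimpleGraph V) (A : Set V) (v : V) : ℕ :=
  (A ∩ G.neighborSet v).ncard

/-- A tree order: a partial order in which the set of predecessors of any
element is linearly ordered. -/
structure IsTreeOrder (le : V → V → Prop) : Prop where
  refl : ∀ a, le a a
  antisymm : ∀ a b, le a b → le b a → a = b
  trans : ∀ a b c, le a b → le b c → le a c
  downLinear : ∀ a b c, le b a → le c a → le b c ∨ le c b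

/-- A chain: a set of pairwise comparable elements. -/
def IsChainOf (le : V → V → Prop) (s : Set V) : Prop :=
  ∀ a ∈ s, ∀ b ∈ s, le a b ∨ le b a

/-- The order has height at most `k`: every chain has at most `k` elements. -/
def HeightLE (le : V → V → Prop) (k : ℕ) : Prop :=
  ∀ s : Set V, IsChainOf le s → s.ncard ≤ k

/-- `v` is a maximal element of the order `le`. -/
def IsLeMaximal (le : V → V → Prop) (v : V) : Prop := ∀ w, le v w → w = v

/-- The order has `d`-height at most `k`: every chain contains at most `k`
non-maximal elements. -/
def DHeightLE (le : V → V → Prop) (k : ℕ) : Prop :=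
  ∀ s : Set V, IsChainOf le s → {v ∈ s | ¬ IsLeMaximal le v}.ncard ≤ k

/-- An elimination order for `G`: a tree order in which the endpoints of each
edge are comparable. -/
def IsElimOrder (G : SimpleGraph V) (le : V → V → Prop) : Prop :=
  IsTreeOrder le ∧ ∀ u v, G.Adj u v → le u v ∨ le v u

/-- The set `S_v` of neighbours of `v` that are incomparable to `v`. -/
def Sset (G : SimpleGraph V) (le : V → V → Prop) (v : V) : Set V :=
  {u | G.Adj u v ∧ ¬ le u v ∧ ¬ le v u}

/-- An elimination order to degree `d` for `G`. -/
def IsElimOrderToDeg (G : SimpleGraph V) (d : ℕ) (le : V → V → Prop) : Prop :=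
  IsTreeOrder le ∧ ∀ v : V, Sset G le v = ∅ ∨
    (IsLeMaximal le v ∧ (Sset G le v).ncard ≤ d ∧
      ∀ u ∈ Sset G le v, {w | le w u ∧ w ≠ u} = {w | le w v ∧ w ≠ v})

/-- `C` is the vertex set of a connected component of the induced subgraph `G[B]`:
a maximal connected subset of `B`. -/
def IsCompOf (G : SimpleGraph V) (B C : Set V) : Prop :=
  C.Nonempty ∧ C ⊆ B ∧ (G.induce C).Connected ∧
    ∀ C', C ⊆ C' → C' ⊆ B → (G.induce C').Connected → C' = C

/-- `TdLE G A k` says that the tree-depth of the induced subgraph `G[A]` is at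
most `k`, following the recursive definition of tree-depth. -/
inductive TdLE (G : SimpleGraph V) : Set V → ℕ → Prop
  | empty (k : ℕ) : TdLE G ∅ k
  | conn (A : Set V) (k : ℕ) (hc : (G.induce A).Connected) (v : V) (hv : v ∈ A)
      (h : TdLE G (A \ {v}) k) : TdLE G A (k + 1)
  | disconn (A : Set V) (k : ℕ) (hne : A.Nonempty) (hc : ¬ (G.induce A).Connected)
      (h : ∀ C, IsCompOf G A C → TdLE G C k) : TdLE G A k

/-- `EdLE G d A k` says that the elimination distance to degree `d` of the
induced subgraph `G[A]` is at most `k`, following the recursive definition. -/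
inductive EdLE (G : SimpleGraph V) (d : ℕ) : Set V → ℕ → Prop
  | base (A : Set V) (k : ℕ) (h : ∀ v ∈ A, degreeIn G A v ≤ d) : EdLE G d A k
  | conn (A : Set V) (k : ℕ) (hd : ¬ ∀ v ∈ A, degreeIn G A v ≤ d)
      (hc : (G.induce A).Connected) (v : V) (hv : v ∈ A)
      (h : EdLE G d (A \ {v}) k) : EdLE G d A (k + 1)
  | disconn (A : Set V) (k : ℕ) (hd : ¬ ∀ v ∈ A, degreeIn G A v ≤ d)
      (hc : ¬ (G.induce A).Connected)
      (h : ∀ C, IsCompOf G A C → EdLE G d C k) : EdLE G d A k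

/-- The `m`-degree torso of `G`: the graph on the vertices of degree greater
than `m`, where two such vertices are adjacent if some path of `G` between them
has all its internal vertices of degree at most `m`. -/
def ATorso (G : SimpleGraph V) (m : ℕ) : SimpleGraph {v : V // m < gdeg G v} where
  Adj u v := u ≠ v ∧ ∃ p : G.Walk u.1 v.1, p.IsPath ∧
      ∀ w ∈ p.support, w ≠ u.1 → w ≠ v.1 → gdeg G w ≤ m
  symm := by
    constructor
    rintro u v ⟨hne, p, hp, hsup⟩
    refine ⟨hne.symm, p.reverse, hp.reverse, fun w hw h1 h2 => ?_⟩
    rw [SimpleGraph.Walk.support_reverse, List.mem_reverse] at hw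
    exact hsup w hw h2 h1
  loopless := by constructor; rintro u ⟨hne, -⟩; exact hne rfl

/-- If `le` is an elimination order to degree `d` for `G` of `d`-height at most `k`
and `A` is the set of non-maximal vertices, then (1) the restriction of `le` to `A`
is an elimination order of `G[A]` of height at most `k`; (2) `G − A` has maximum
degree at most `d`; (3) for each component `C` of `G − A` and incomparable
`u, v ∈ A`, one of `E_G(u, C)`, `E_G(v, C)` is empty. -/
theorem nonmaximal_part_of_elimOrderToDeg {V : Type*} [Fintype V] (G : SimpleGraph V)
    (d k : ℕ) (le : V → V → Prop)
    (hle : IsElimOrderToDeg G d le) (hht : DHeightLE le k)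
    (A : Set V) (hA : A = {v | ¬ IsLeMaximal le v}) :
    (IsElimOrder (G.induce A) (fun a b : A => le a.1 b.1) ∧
      HeightLE (fun a b : A => le a.1 b.1) k) ∧
    (∀ v ∈ Aᶜ, degreeIn G Aᶜ v ≤ d) ∧
    (∀ C : Set V, IsCompOf G Aᶜ C → ∀ u ∈ A, ∀ v ∈ A, ¬ le u v → ¬ le v u →
      (∀ x ∈ C, ¬ G.Adj u x) ∨ (∀ x ∈ C, ¬ G.Adj v x)) := by

  obtain ⟨hto, hS⟩ := hle
  refine ⟨⟨⟨⟨fun a => hto.refl _, fun a b h1 h2 => Subtype.ext (hto.antisymm _ _ h1 h2),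
      fun a b c => hto.trans _ _ _, fun a b c => hto.downLinear _ _ _⟩, ?_⟩, ?_⟩, ?_, ?_⟩
  · rintro u v huv
    by_contra hcon
    push_neg at hcon
    have hadj : G.Adj u.1 v.1 := huv
    have hmem : u.1 ∈ Sset G le v.1 := ⟨hadj, hcon.1, hcon.2⟩
    rcases hS v.1 with h | h
    · rw [h] at hmem; exact hmem
    · have hv : v.1 ∈ {v | ¬ IsLeMaximal le v} := hA ▸ v.2
      exact hv h.1
  · intro s hs
    have h2 : IsChainOf le (Subtype.val '' s) := by
      rintro a ⟨a', ha', rfl⟩ b ⟨b', hb', rfl⟩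
      exact hs a' ha' b' hb'
    have h3 := hht _ h2
    have h4 : {v ∈ Subtype.val '' s | ¬ IsLeMaximal le v} = Subtype.val '' s := by
      ext x
      constructor
      · exact fun h => h.1
      · rintro ⟨a, ha, rfl⟩
        refine ⟨⟨a, ha, rfl⟩, ?_⟩
        exact (show a.1 ∈ {v | ¬ IsLeMaximal le v} from hA ▸ a.2)
    rw [h4, Set.ncard_image_of_injective s Subtype.val_injective] at h3
    exact h3
  · intro v hv
    have hvmax : IsLeMaximal le v := by rw [hA] at hv; simpa using hv
    have hsub : Aᶜ ∩ G.neighborSet v ⊆ Sset G le v := by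
      rintro u ⟨hu, hadj⟩
      have humax : IsLeMaximal le u := by rw [hA] at hu; simpa using hu
      have hne : u ≠ v := (G.ne_of_adj hadj).symm
      exact ⟨hadj.symm, fun h => hne.symm (humax v h), fun h => hne (hvmax u h)⟩
    rcases hS v with h | h
    · rw [h, Set.subset_empty_iff] at hsub
      rw [degreeIn, hsub]
      simp
    · exact le_trans (Set.ncard_le_ncard hsub (Set.toFinite _)) h.2.1
  · intro C hC u hu v hv huv hvu
    by_contra hcon
    push_neg at hcon
    obtain ⟨⟨x, hx, hux⟩, ⟨y, hy, hvy⟩⟩ := hcon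
    have hCmax : ∀ c ∈ C, IsLeMaximal le c := by
      intro c hc
      have := hC.2.1 hc
      rw [hA] at this
      simpa using this
    -- strict predecessors are constant along C
    have key : ∀ (a b : ↥C), (G.induce C).Reachable a b →
        {w | le w a.1 ∧ w ≠ a.1} = {w | le w b.1 ∧ w ≠ b.1} := by
      intro a b hr
      obtain ⟨p⟩ := hr
      induction p with
      | nil => rfl
      | @cons a c b h p ih =>
        refine Eq.trans ?_ ih
        have hadj : G.Adj a.1 c.1 := h
        have hamax := hCmax a.1 a.2
        have hcmax := hCmax c.1 c.2
        have hne : a.1 ≠ c.1 := G.ne_of_adj hadj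
        have hcS : c.1 ∈ Sset G le a.1 :=
          ⟨hadj.symm, fun hl => hne (hcmax a.1 hl), fun hl => hne.symm (hamax c.1 hl)⟩
        rcases hS a.1 with hh | hh
        · rw [hh] at hcS; exact absurd hcS (Set.notMem_empty _)
        · exact (hh.2.2 c.1 hcS).symm
    have haux : ∀ w ∈ A, ∀ c ∈ C, G.Adj w c → le w c ∧ w ≠ c := by
      intro w hw c hc hadj
      have hcmax := hCmax c hc
      have hwnm : ¬ IsLeMaximal le w := by rw [hA] at hw; simpa using hw
      have hne : w ≠ c := G.ne_of_adj hadj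
      refine ⟨?_, hne⟩
      by_contra hwc
      have hcw : ¬ le c w := fun h => hne (hcmax w h)
      have hxS : c ∈ Sset G le w := ⟨hadj.symm, hcw, hwc⟩
      rcases hS w with hh | hh
      · rw [hh] at hxS; exact hxS
      · exact hwnm hh.1
    have hux' := haux u hu x hx hux
    have hvy' := haux v hv y hy hvy
    have hreach : (G.induce C).Reachable ⟨y, hy⟩ ⟨x, hx⟩ := hC.2.2.1 _ _
    have heq := key ⟨y, hy⟩ ⟨x, hx⟩ hreach
    have hvx : le v x := by
      have : v ∈ {w | le w y ∧ w ≠ y} := hvy'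
      rw [heq] at this
      exact this.1
    rcases hto.downLinear x u v hux'.1 hvx with h | h
    · exact huv h
    · exact hvu h
end

section
/- Let G be a finite simple graph, A ⊆ V(G), and ≤_A an elimination order of the induced subgraph G[A] of height at most k, such that: (1) the induced subgraph of G on V(G) ∖ A has maximum degree at most d; and (2) for every connected component of the induced subgraph on V(G) ∖ A with vertex set C, and all ≤_A-incomparable u, v ∈ A, at least one of E_G(u, C) and E_G(v, C) is empty. Then ≤_A can be extended to a tree order ≤ on V(G) in which every vertex of V(G) ∖ A is ≤-maximal and which is an elimination order to degree d for G of d-height at most k. -/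
open SimpleGraph Set

variable {V : Type*}

lemma induce_reach_mono {V : Type*} (G : SimpleGraph V) {s t : Set V} (hst : s ⊆ t)
    {a b : s} (h : (G.induce s).Reachable a b) :
    (G.induce t).Reachable ⟨a.1, hst a.2⟩ ⟨b.1, hst b.2⟩ := by
  let f : (G.induce s) →g (G.induce t) := ⟨fun x => ⟨x.1, hst x.2⟩, fun hadj => hadj⟩
  exact h.map f

lemma reach_isCompOf {V : Type*} (G : SimpleGraph V) (B : Set V) (v : V) (hv : v ∈ B) :
    IsCompOf G B {x | ∃ hx : x ∈ B, (G.induce B).Reachable ⟨x, hx⟩ ⟨v, hv⟩} := by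
  set C := {x | ∃ hx : x ∈ B, (G.induce B).Reachable ⟨x, hx⟩ ⟨v, hv⟩} with hCdef
  have hvC : v ∈ C := ⟨hv, Reachable.refl _⟩
  have hsub : C ⊆ B := fun x hx => hx.1
  have key : ∀ (a b : B) (p : (G.induce B).Walk a b) (ha : a.1 ∈ C) (hb : b.1 ∈ C),
      (G.induce C).Reachable ⟨a.1, ha⟩ ⟨b.1, hb⟩ := by
    intro a b p
    induction p with
    | nil => intro ha hb; exact Reachable.refl _
    | @cons a c b h p ih =>
      intro ha hb
      have hcC : c.1 ∈ C := by
        obtain ⟨hbB, hrb⟩ := hb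
        exact ⟨c.2, Reachable.trans ⟨p⟩ hrb⟩
      have hadj : (G.induce C).Adj ⟨a.1, ha⟩ ⟨c.1, hcC⟩ := h
      exact (hadj.reachable).trans (ih hcC hb)
  refine ⟨⟨v, hvC⟩, hsub, ?_, ?_⟩
  · rw [SimpleGraph.connected_iff]
    refine ⟨fun x y => ?_, ⟨⟨v, hvC⟩⟩⟩
    obtain ⟨hx, hrx⟩ := x.2
    obtain ⟨hy, hry⟩ := y.2
    obtain ⟨px⟩ := hrx
    obtain ⟨py⟩ := hry
    have h1' := key ⟨x.1, hx⟩ ⟨v, hv⟩ px x.2 hvC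
    have h2' := key ⟨y.1, hy⟩ ⟨v, hv⟩ py y.2 hvC
    exact h1'.trans h2'.symm
  · intro C' hCC' hC'B hconn
    refine Set.Subset.antisymm ?_ hCC'
    intro x hx
    have hvC' : v ∈ C' := hCC' hvC
    have hr := induce_reach_mono G hC'B (hconn.preconnected ⟨x, hx⟩ ⟨v, hvC'⟩)
    exact ⟨hC'B hx, hr⟩

/-- If `leA` is an elimination order of `G[A]` of height at most `k` such that
`G − A` has maximum degree at most `d` and each component of `G − A` sees at most
one branch of `leA`, then `leA` extends to a tree order on `V(G)` in which every
vertex outside `A` is maximal and which is an elimination order to degree `d`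
for `G` of `d`-height at most `k`. -/
theorem extend_elimOrder_to_deg {V : Type*} [Fintype V] (G : SimpleGraph V)
    (d k : ℕ) (A : Set V) (leA : A → A → Prop)
    (h1 : IsElimOrder (G.induce A) leA) (h2 : HeightLE leA k)
    (h3 : ∀ v ∈ Aᶜ, degreeIn G Aᶜ v ≤ d)
    (h4 : ∀ C : Set V, IsCompOf G Aᶜ C → ∀ u v : A, ¬ leA u v → ¬ leA v u →
      (∀ x ∈ C, ¬ G.Adj u.1 x) ∨ (∀ x ∈ C, ¬ G.Adj v.1 x)) :
    ∃ le : V → V → Prop, (∀ a b : A, le a.1 b.1 ↔ leA a b) ∧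
      (∀ v ∉ A, IsLeMaximal le v) ∧
      IsElimOrderToDeg G d le ∧ DHeightLE le k := by
  classical
  obtain ⟨⟨Arefl, Aanti, Atrans, Adown⟩, Aedge⟩ := h1
  set H := G.induce (Aᶜ : Set V) with hH
  set le : V → V → Prop := fun u v =>
    u = v ∨
    (∃ (hu : u ∈ A) (hv : v ∈ A), leA ⟨u, hu⟩ ⟨v, hv⟩) ∨
    (∃ (hu : u ∈ A) (hv : v ∈ (Aᶜ : Set V)), ∃ b : A, leA ⟨u, hu⟩ b ∧
      ∃ x, ∃ (hx : x ∈ (Aᶜ : Set V)), G.Adj b.1 x ∧ H.Reachable ⟨x, hx⟩ ⟨v, hv⟩) with hle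
  -- basic facts
  have hAle : ∀ a b : A, le a.1 b.1 ↔ leA a b := by
    intro a b
    constructor
    · rintro (h | ⟨hu, hv, h⟩ | ⟨hu, hv, _⟩)
      · have : a = b := Subtype.ext h
        subst this; exact Arefl a
      · exact h
      · exact absurd b.2 hv
    · intro h
      exact Or.inr (Or.inl ⟨a.2, b.2, h⟩)
  have hmax : ∀ v ∉ A, IsLeMaximal le v := by
    intro v hv w hw
    rcases hw with h | ⟨hu, _⟩ | ⟨hu, _⟩
    · exact h.symm
    · exact absurd hu hv
    · exact absurd hu hv
  -- comparability of A-vertices attached to the same component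
  have hcomp : ∀ (w : V) (hw : w ∈ (Aᶜ : Set V)) (b c : A) (x y : V)
      (hx : x ∈ (Aᶜ : Set V)) (hy : y ∈ (Aᶜ : Set V)),
      G.Adj b.1 x → G.Adj c.1 y → H.Reachable ⟨x, hx⟩ ⟨w, hw⟩ →
      H.Reachable ⟨y, hy⟩ ⟨w, hw⟩ → leA b c ∨ leA c b := by
    intro w hw b c x y hx hy hbx hcy hrx hry
    by_contra hcon
    push_neg at hcon
    rcases h4 _ (reach_isCompOf G (Aᶜ : Set V) w hw) b c hcon.1 hcon.2 with h | h
    · exact h x ⟨hx, hrx⟩ hbx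
    · exact h y ⟨hy, hry⟩ hcy
  refine ⟨le, hAle, hmax, ⟨⟨?_, ?_, ?_, ?_⟩, ?_⟩, ?_⟩
  · -- refl
    intro a; exact Or.inl rfl
  · -- antisymm
    rintro a b (h | ⟨hu, hv, h⟩ | ⟨hu, hv, _⟩) hba
    · exact h
    · rcases hba with h' | ⟨hu', hv', h'⟩ | ⟨hu', hv', _⟩
      · exact h'.symm
      · exact congrArg Subtype.val (Aanti ⟨a, hu⟩ ⟨b, hv⟩ h h')
      · exact absurd hu hv'
    · rcases hba with h' | ⟨hu', hv', h'⟩ | ⟨hu', hv', _⟩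
      · exact h'.symm
      · exact absurd hu' hv
      · exact absurd hu' hv
  · -- trans
    rintro a b c (rfl | ⟨hu, hv, h⟩ | ⟨hu, hv, hb⟩) hbc
    · exact hbc
    · rcases hbc with rfl | ⟨hu', hv', h'⟩ | ⟨hu', hv', b', hb', x, hx, hax, hr⟩
      · exact Or.inr (Or.inl ⟨hu, hv, h⟩)
      · exact Or.inr (Or.inl ⟨hu, hv', Atrans _ _ _ h h'⟩)
      · exact Or.inr (Or.inr ⟨hu, hv', b', Atrans _ _ _ h hb', x, hx, hax, hr⟩)
    · rcases hbc with rfl | ⟨hu', hv', h'⟩ | ⟨hu', hv', _⟩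
      · exact Or.inr (Or.inr ⟨hu, hv, hb⟩)
      · exact absurd hu' hv
      · exact absurd hu' hv
  · -- downLinear
    rintro a b c hba hca
    rcases hba with rfl | ⟨hub, hva, hb⟩ | ⟨hub, hva, b₁, hbb₁, x, hx, hbx, hrx⟩
    · exact Or.inr hca
    · rcases hca with rfl | ⟨huc, hva', hc⟩ | ⟨huc, hva', _⟩
      · exact Or.inl (Or.inr (Or.inl ⟨hub, hva, hb⟩))
      · rcases Adown ⟨a, hva⟩ ⟨b, hub⟩ ⟨c, huc⟩ hb hc with h | h
        · exact Or.inl (Or.inr (Or.inl ⟨hub, huc, h⟩))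
        · exact Or.inr (Or.inr (Or.inl ⟨huc, hub, h⟩))
      · exact absurd hva hva'
    · rcases hca with rfl | ⟨huc, hva', hc⟩ | ⟨huc, hva', c₁, hcc₁, y, hy, hcy, hry⟩
      · exact Or.inl (Or.inr (Or.inr ⟨hub, hva, b₁, hbb₁, x, hx, hbx, hrx⟩))
      · exact absurd hva' hva
      · have hcmp := hcomp a hva b₁ c₁ x y hx hy hbx hcy hrx hry
        rcases hcmp with h | h
        · have hb' : leA ⟨b, hub⟩ c₁ := Atrans _ _ _ hbb₁ h
          rcases Adown c₁ ⟨b, hub⟩ ⟨c, huc⟩ hb' hcc₁ with h' | h'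
          · exact Or.inl (Or.inr (Or.inl ⟨hub, huc, h'⟩))
          · exact Or.inr (Or.inr (Or.inl ⟨huc, hub, h'⟩))
        · have hc' : leA ⟨c, huc⟩ b₁ := Atrans _ _ _ hcc₁ h
          rcases Adown b₁ ⟨b, hub⟩ ⟨c, huc⟩ hbb₁ hc' with h' | h'
          · exact Or.inl (Or.inr (Or.inl ⟨hub, huc, h'⟩))
          · exact Or.inr (Or.inr (Or.inl ⟨huc, hub, h'⟩))
  · -- elimination to degree d condition
    intro v
    by_cases hvA : v ∈ A
    · left
      ext u
      simp only [Sset, Set.mem_setOf_eq, Set.mem_empty_iff_false, iff_false, not_and]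
      intro hadj hnuv
      by_contra hnvu
      by_cases huA : u ∈ A
      · have : (G.induce A).Adj ⟨u, huA⟩ ⟨v, hvA⟩ := hadj
        rcases Aedge _ _ this with h | h
        · exact hnuv ((hAle ⟨u, huA⟩ ⟨v, hvA⟩).mpr h)
        · exact hnvu ((hAle ⟨v, hvA⟩ ⟨u, huA⟩).mpr h)
      · have hu' : u ∈ (Aᶜ : Set V) := huA
        exact hnvu (Or.inr (Or.inr ⟨hvA, hu', ⟨v, hvA⟩, Arefl _, u, hu',
          hadj.symm, Reachable.refl _⟩))
    · right
      have hv' : v ∈ (Aᶜ : Set V) := hvA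
      have hSset : Sset G le v = (Aᶜ : Set V) ∩ G.neighborSet v := by
        ext u
        simp only [Sset, Set.mem_setOf_eq, Set.mem_inter_iff, SimpleGraph.mem_neighborSet,
          Set.mem_compl_iff]
        constructor
        · rintro ⟨hadj, hnuv, hnvu⟩
          refine ⟨?_, hadj.symm⟩
          intro huA
          exact hnuv (Or.inr (Or.inr ⟨huA, hv', ⟨u, huA⟩, Arefl _, v, hv',
            hadj, Reachable.refl _⟩))
        · rintro ⟨huA, hadj⟩
          refine ⟨hadj.symm, ?_, ?_⟩
          · rintro (rfl | ⟨hu, _⟩ | ⟨hu, _⟩)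
            · exact G.irrefl hadj
            · exact huA hu
            · exact huA hu
          · rintro (rfl | ⟨hu, _⟩ | ⟨hu, _⟩)
            · exact G.irrefl hadj
            · exact hvA hu
            · exact hvA hu
      refine ⟨hmax v hvA, ?_, ?_⟩
      · rw [hSset]; exact h3 v hv'
      · intro u hu
        rw [hSset] at hu
        obtain ⟨huA, hadj⟩ := hu
        have huA' : u ∈ (Aᶜ : Set V) := huA
        have hadjH : H.Adj ⟨u, huA'⟩ ⟨v, hv'⟩ := hadj.symm
        ext w
        simp only [Set.mem_setOf_eq]
        constructor
        · rintro ⟨(rfl | ⟨hw, hu'', h⟩ | ⟨hw, hu'', b, hb, x, hx, hbx, hrx⟩), hne⟩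
          · exact absurd rfl hne
          · exact absurd hu'' huA
          · refine ⟨Or.inr (Or.inr ⟨hw, hv', b, hb, x, hx, hbx,
              hrx.trans hadjH.reachable⟩), fun h => hvA (h ▸ hw)⟩
        · rintro ⟨(rfl | ⟨hw, hv'', h⟩ | ⟨hw, hv'', b, hb, x, hx, hbx, hrx⟩), hne⟩
          · exact absurd rfl hne
          · exact absurd hv'' hvA
          · refine ⟨Or.inr (Or.inr ⟨hw, huA', b, hb, x, hx, hbx,
              hrx.trans hadjH.symm.reachable⟩), fun h => huA (h ▸ hw)⟩
  · -- d-height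
    intro s hs
    set s' : Set A := {a : A | a.1 ∈ s} with hs'
    have hchain : IsChainOf leA s' := by
      intro a ha b hb
      rcases hs a.1 ha b.1 hb with h | h
      · exact Or.inl ((hAle a b).mp h)
      · exact Or.inr ((hAle b a).mp h)
    have hsub : {v ∈ s | ¬ IsLeMaximal le v} ⊆ Subtype.val '' s' := by
      intro v hv
      obtain ⟨hvs, hnm⟩ := hv
      by_cases hvA : v ∈ A
      · exact ⟨⟨v, hvA⟩, hvs, rfl⟩
      · exact absurd (hmax v hvA) hnm
    calc {v ∈ s | ¬ IsLeMaximal le v}.ncard ≤ (Subtype.val '' s').ncard :=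
          Set.ncard_le_ncard hsub (Set.toFinite _)
      _ = s'.ncard := Set.ncard_image_of_injective _ Subtype.val_injective
      _ ≤ k := h2 s' hchain
end

section
/- Let G be a finite simple graph with maximum degree at most k+d, let ≤ be an elimination order to degree d for G of d-height at most k with non-maximal subgraph H, and let A = V(H) ∪ {v ∈ V(G) : deg_G(v) > d}. Then the induced subgraph G[A] has an elimination order of height at most k(k+d+1) which can be extended to a tree order on V(G) in which every vertex of V(G) ∖ A is maximal and which is an elimination order to degree d for G. -/
open SimpleGraph Set

variable {V : Type*}

private theorem aux_ncard_biUnion_le' {α β : Type*} (m : ℕ) (f : α → Set β)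
    (hf : ∀ w, (f w).Finite)
    (D : Set α) (hD : D.Finite) (hb : ∀ w ∈ D, (f w).ncard ≤ m) :
    (⋃ w ∈ D, f w).ncard ≤ D.ncard * m := by
  classical
  have heq : (⋃ w ∈ D, f w) = ↑(hD.toFinset.biUnion fun w => (hf w).toFinset) := by
    ext x; simp
  rw [heq, Set.ncard_coe_finset]
  calc (hD.toFinset.biUnion fun w => (hf w).toFinset).card
      ≤ ∑ w ∈ hD.toFinset, ((hf w).toFinset).card := Finset.card_biUnion_le
    _ ≤ hD.toFinset.card • m := Finset.sum_le_card_nsmul _ _ m (by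
        intro w hw
        rw [← Set.ncard_eq_toFinset_card _ (hf w)]
        exact hb w ((hD.mem_toFinset).mp hw))
    _ = D.ncard * m := by rw [smul_eq_mul, Set.ncard_eq_toFinset_card _ hD]

/-- If `G` has maximum degree at most `k + d` and `le` is an elimination order to
degree `d` of `d`-height at most `k` with non-maximal subgraph `H`, and
`A = V(H) ∪ {v | deg v > d}`, then `G[A]` has an elimination order of height at most
`k(k+d+1)` extending to a tree order on `V(G)` in which every vertex outside `A`
is maximal and which is an elimination order to degree `d` for `G`. -/
theorem adding_high_degree_vertices {V : Type*} [Fintype V] (G : SimpleGraph V)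
    (k d : ℕ) (hΔ : ∀ v, gdeg G v ≤ k + d)
    (le : V → V → Prop) (hle : IsElimOrderToDeg G d le) (hht : DHeightLE le k)
    (A : Set V) (hA : A = {v | ¬ IsLeMaximal le v} ∪ {v | d < gdeg G v}) :
    ∃ leA : A → A → Prop,
      IsElimOrder (G.induce A) leA ∧ HeightLE leA (k * (k + d + 1)) ∧
      ∃ le' : V → V → Prop, (∀ a b : A, le' a.1 b.1 ↔ leA a b) ∧
        (∀ v ∉ A, IsLeMaximal le' v) ∧ IsElimOrderToDeg G d le' := by
  classical
  obtain ⟨htr, hcond⟩ := hle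
  -- the strict down-set
  set Ds : V → Set V := fun v => {w | le w v ∧ w ≠ v} with hDs
  -- membership in a cluster
  set M : V → Prop := fun v => Sset G le v ≠ ∅ with hM
  have hMmax : ∀ v, M v → IsLeMaximal le v := fun v hv => ((hcond v).resolve_left hv).1
  have hMcard : ∀ v, M v → (Sset G le v).ncard ≤ d := fun v hv => ((hcond v).resolve_left hv).2.1
  have hMdown : ∀ v, M v → ∀ u ∈ Sset G le v, Ds u = Ds v :=
    fun v hv => ((hcond v).resolve_left hv).2.2
  have hSmem : ∀ {u v}, u ∈ Sset G le v → v ∈ Sset G le u := by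
    rintro u v ⟨hadj, h1, h2⟩; exact ⟨hadj.symm, h2, h1⟩
  have hSM : ∀ {u v}, u ∈ Sset G le v → M u := by
    intro u v hu
    exact Set.nonempty_iff_ne_empty.mp ⟨v, hSmem hu⟩
  have hnm : ∀ {w v}, le w v → w ≠ v → ¬ IsLeMaximal le w := by
    intro w v h hne hmax; exact hne (hmax v h).symm
  -- the ranking function
  set N : ℕ := Fintype.card V with hNdef
  set e : V ≃ Fin N := Fintype.equivFin V with hedef
  set rank : V → ℕ := fun v => if d < gdeg G v then (e v : ℕ) else N with hrank
  have hrankN : ∀ v, rank v ≤ N := by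
    intro v
    by_cases h : d < gdeg G v
    · simp only [hrank, if_pos h]; exact (e v).2.le
    · simp only [hrank, if_neg h]; exact le_refl N
  have hrank_high : ∀ v, rank v < N → d < gdeg G v := by
    intro v h
    by_contra hc
    simp only [hrank, if_neg hc] at h
    exact lt_irrefl _ h
  have hrank_val : ∀ v, d < gdeg G v → rank v = (e v : ℕ) := by
    intro v h; simp only [hrank, if_pos h]
  have hrank_lowval : ∀ v, ¬ d < gdeg G v → rank v = N := by
    intro v h; simp only [hrank, if_neg h]
  have hrank_inj : ∀ u v, rank u = rank v → rank u < N → u = v := by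
    intro u v h hlt
    have hu := hrank_high u hlt
    have hv := hrank_high v (h ▸ hlt)
    rw [hrank_val u hu, hrank_val v hv] at h
    exact e.injective (Fin.ext h)
  -- the new order
  set le' : V → V → Prop := fun a b =>
    le a b ∨ (M a ∧ M b ∧ Ds a = Ds b ∧ rank a < rank b) with hle'
  have hle'_of_le : ∀ {a b}, le a b → le' a b := fun h => Or.inl h
  -- tree order for le'
  have htr' : IsTreeOrder le' := by
    constructor
    · intro a; exact Or.inl (htr.refl a)
    · rintro a b (h1 | ⟨ha, hb, hD, hr⟩) (h2 | ⟨ha2, hb2, hD2, hr2⟩)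
      · exact htr.antisymm a b h1 h2
      · exact (hMmax a hb2 b h1).symm
      · exact hMmax b hb a h2
      · exact absurd (hr.trans hr2) (lt_irrefl _)
    · rintro a b c (h1 | ⟨ha, hb, hD, hr⟩) (h2 | ⟨hb2, hc2, hD2, hr2⟩)
      · exact Or.inl (htr.trans a b c h1 h2)
      · rcases eq_or_ne a b with rfl | hne
        · exact Or.inr ⟨hb2, hc2, hD2, hr2⟩
        · have : a ∈ Ds b := ⟨h1, hne⟩
          rw [hD2] at this
          exact Or.inl this.1
      · have : c = b := hMmax b hb c h2
        subst this
        exact Or.inr ⟨ha, hb, hD, hr⟩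
      · exact Or.inr ⟨ha, hc2, hD.trans hD2, hr.trans hr2⟩
    · rintro a b c (h1 | ⟨hb, ha, hD, hr⟩) (h2 | ⟨hc2, ha2, hD2, hr2⟩)
      · rcases htr.downLinear a b c h1 h2 with h | h
        · exact Or.inl (Or.inl h)
        · exact Or.inr (Or.inl h)
      · rcases eq_or_ne b a with rfl | hne
        · exact Or.inr (Or.inr ⟨hc2, ha2, hD2, hr2⟩)
        · have : b ∈ Ds a := ⟨h1, hne⟩
          rw [← hD2] at this
          exact Or.inl (Or.inl this.1)
      · rcases eq_or_ne c a with rfl | hne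
        · exact Or.inl (Or.inr ⟨hb, ha, hD, hr⟩)
        · have : c ∈ Ds a := ⟨h2, hne⟩
          rw [← hD] at this
          exact Or.inr (Or.inl this.1)
      · rcases lt_trichotomy (rank b) (rank c) with h | h | h
        · exact Or.inl (Or.inr ⟨hb, hc2, hD.trans hD2.symm, h⟩)
        · have : b = c := hrank_inj b c h (lt_of_lt_of_le hr (hrankN a))
          exact Or.inl (Or.inl (this ▸ htr.refl b))
        · exact Or.inr (Or.inr ⟨hc2, hb, hD2.trans hD.symm, h⟩)
  -- S-sets can only shrink
  have hS'sub : ∀ v, Sset G le' v ⊆ Sset G le v := by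
    rintro v u ⟨hadj, h1, h2⟩
    exact ⟨hadj, fun h => h1 (Or.inl h), fun h => h2 (Or.inl h)⟩
  -- cluster members incomparable in le' with equal strict down-sets of rank N
  -- le' is an elimination order to degree d
  have helim' : IsElimOrderToDeg G d le' := by
    refine ⟨htr', fun v => ?_⟩
    by_cases hv : Sset G le v = ∅
    · left
      exact Set.subset_empty_iff.mp (hv ▸ hS'sub v)
    · by_cases hdeg : d < gdeg G v
      · left
        rw [Set.eq_empty_iff_forall_notMem]
        intro u hu
        have huS := hS'sub v hu
        have huM : M u := hSM huS
        have hD : Ds u = Ds v := hMdown v hv u huS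
        have hune : u ≠ v := huS.1.ne
        have hrv : rank v < N := by
          rw [hrank_val v hdeg]; exact (e v).2
        rcases lt_trichotomy (rank u) (rank v) with h | h | h
        · exact hu.2.1 (Or.inr ⟨huM, hv, hD, h⟩)
        · exact hune (hrank_inj u v h (h ▸ hrv))
        · exact hu.2.2 (Or.inr ⟨hv, huM, hD.symm, h⟩)
      · right
        have hrvN : rank v = N := hrank_lowval v hdeg
        have hmax' : IsLeMaximal le' v := by
          rintro w (h | ⟨_, _, _, hr⟩)
          · exact hMmax v hv w h
          · exact absurd (hrvN ▸ hr) (not_lt.mpr (hrankN w))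
        refine ⟨hmax', (Set.ncard_le_ncard (hS'sub v) (Set.toFinite _)).trans (hMcard v hv), ?_⟩
        intro u hu
        have huS := hS'sub v hu
        have huM : M u := hSM huS
        have hD : Ds u = Ds v := hMdown v hv u huS
        have hruN : rank u = N := by
          by_contra hc
          have hlt : rank u < N := lt_of_le_of_ne (hrankN u) hc
          exact hu.2.1 (Or.inr ⟨huM, hv, hD, hrvN ▸ hlt⟩)
        have key : ∀ x y : V, M x → M y → Ds x = Ds y → rank x = N → rank y = N →
            ∀ w, (le' w x ∧ w ≠ x) → (le' w y ∧ w ≠ y) := by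
          rintro x y hx hy hDxy hrx hry w ⟨(h | ⟨hwM, _, hDwx, hr⟩), hne⟩
          · have : w ∈ Ds x := ⟨h, hne⟩
            rw [hDxy] at this
            exact ⟨Or.inl this.1, this.2⟩
          · refine ⟨Or.inr ⟨hwM, hy, hDwx.trans hDxy, by rw [hry, ← hrx]; exact hr⟩, ?_⟩
            intro hwy
            rw [hwy, hry, ← hrx] at hr
            exact lt_irrefl _ hr
        ext w
        constructor
        · exact fun h => key u v huM hv hD hruN hrvN w h
        · exact fun h => key v u hv huM hD.symm hrvN hruN w h
  -- maximality outside A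
  have hmaxout : ∀ v ∉ A, IsLeMaximal le' v := by
    intro v hv
    rw [hA] at hv
    have hvmax : IsLeMaximal le v :=
      not_not.mp (fun hc => hv (Set.mem_union_left _ hc))
    have hvdeg : ¬ d < gdeg G v := fun hc => hv (Set.mem_union_right _ hc)
    rintro w (h | ⟨_, _, _, hr⟩)
    · exact hvmax w h
    · rw [hrank_lowval v hvdeg] at hr
      exact absurd hr (not_lt.mpr (hrankN w))
  -- high degree for maximal members of A
  have hAhigh : ∀ v ∈ A, IsLeMaximal le v → d < gdeg G v := by
    intro v hvA hvmax
    rw [hA] at hvA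
    rcases hvA with h | h
    · exact absurd hvmax h
    · exact h
  -- maximal vertices have all neighbours in Ds ∪ Sset
  have hnbr : ∀ v, IsLeMaximal le v → G.neighborSet v ⊆ Ds v ∪ Sset G le v := by
    intro v hvmax x hx
    have hadj : G.Adj v x := hx
    by_cases h1 : le x v
    · exact Or.inl ⟨h1, hadj.ne'⟩
    · by_cases h2 : le v x
      · exact absurd (hvmax x h2) hadj.ne'
      · exact Or.inr ⟨hadj.symm, h1, h2⟩
  -- a maximal high-degree vertex has a neighbour in its down-set
  have hdown_nbr : ∀ v, IsLeMaximal le v → d < gdeg G v → ∃ w ∈ Ds v, G.Adj w v := by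
    intro v hvmax hvdeg
    by_contra hc
    push_neg at hc
    have hsub : G.neighborSet v ⊆ Sset G le v := by
      intro x hx
      rcases hnbr v hvmax hx with h | h
      · exact absurd (hx : G.Adj v x).symm (hc x h)
      · exact h
    have hSd : (Sset G le v).ncard ≤ d := by
      by_cases hS : Sset G le v = ∅
      · rw [hS]; simp
      · exact hMcard v hS
    have : gdeg G v ≤ d := le_trans (Set.ncard_le_ncard hsub (Set.toFinite _)) hSd
    exact absurd hvdeg (not_lt.mpr this)
  -- down-sets are chains of non-maximal vertices, hence small
  have hDsmall : ∀ v, (Ds v).ncard ≤ k := by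
    intro v
    have hchain : IsChainOf le (Ds v) := by
      intro a ha b hb
      exact htr.downLinear v a b ha.1 hb.1
    have := hht (Ds v) hchain
    have heq : {w ∈ Ds v | ¬ IsLeMaximal le w} = Ds v := by
      ext w
      simp only [Set.mem_setOf_eq, Set.mem_sep_iff, and_iff_left_iff_imp]
      exact fun hw => hnm hw.1 hw.2
    rwa [heq] at this
  -- the restricted order
  refine ⟨fun a b => le' a.1 b.1, ⟨?_, ?_⟩, ?_, le', fun a b => Iff.rfl, hmaxout, helim'⟩
  · -- tree order on A
    constructor
    · intro a; exact htr'.refl a.1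
    · intro a b h1 h2; exact Subtype.ext (htr'.antisymm a.1 b.1 h1 h2)
    · intro a b c h1 h2; exact htr'.trans a.1 b.1 c.1 h1 h2
    · intro a b c h1 h2; exact htr'.downLinear a.1 b.1 c.1 h1 h2
  · -- edges of G[A] are comparable
    intro a b hadj
    have hadj' : G.Adj a.1 b.1 := hadj
    by_cases h1 : le a.1 b.1
    · exact Or.inl (Or.inl h1)
    · by_cases h2 : le b.1 a.1
      · exact Or.inr (Or.inl h2)
      · have haS : a.1 ∈ Sset G le b.1 := ⟨hadj', h1, h2⟩
        have haM : M a.1 := hSM haS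
        have hbM : M b.1 := hSM (hSmem haS)
        have hD : Ds a.1 = Ds b.1 := hMdown b.1 hbM a.1 haS
        have hha : d < gdeg G a.1 := hAhigh a.1 a.2 (hMmax _ haM)
        have hhb : d < gdeg G b.1 := hAhigh b.1 b.2 (hMmax _ hbM)
        have hne : rank a.1 ≠ rank b.1 := by
          rw [hrank_val _ hha, hrank_val _ hhb]
          intro h
          exact hadj'.ne (e.injective (Fin.ext h))
        rcases lt_or_gt_of_ne hne with h | h
        · exact Or.inl (Or.inr ⟨haM, hbM, hD, h⟩)
        · exact Or.inr (Or.inr ⟨hbM, haM, hD.symm, h⟩)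
  · -- height bound
    intro s hs
    set s' : Set V := Subtype.val '' s with hs'def
    have hcard : s.ncard = s'.ncard :=
      (Set.ncard_image_of_injective s Subtype.val_injective).symm
    have hs'A : ∀ x ∈ s', x ∈ A := by
      rintro x ⟨a, ha, rfl⟩; exact a.2
    have hs'chain : ∀ x ∈ s', ∀ y ∈ s', le' x y ∨ le' y x := by
      rintro x ⟨a, ha, rfl⟩ y ⟨b, hb, rfl⟩
      exact hs a ha b hb
    set sn : Set V := {v ∈ s' | ¬ IsLeMaximal le v} with hsn
    set sm : Set V := {v ∈ s' | IsLeMaximal le v} with hsm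
    have hsplit : s' = sn ∪ sm := by
      ext x
      simp only [hsn, hsm, Set.mem_union, Set.mem_sep_iff]
      constructor
      · intro h; by_cases hm : IsLeMaximal le x
        · exact Or.inr ⟨h, hm⟩
        · exact Or.inl ⟨h, hm⟩
      · rintro (h | h) <;> exact h.1
    -- bound on sn
    have hsn_le : sn.ncard ≤ k := by
      have hchain : IsChainOf le sn := by
        rintro a ⟨haS, hamax⟩ b ⟨hbS, hbmax⟩
        rcases hs'chain a haS b hbS with (h | ⟨hMa, _, _, _⟩) | (h | ⟨hMb, _, _, _⟩)
        · exact Or.inl h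
        · exact absurd (hMmax a hMa) hamax
        · exact Or.inr h
        · exact absurd (hMmax b hMb) hbmax
      have := hht sn hchain
      have heq : {v ∈ sn | ¬ IsLeMaximal le v} = sn := by
        ext w
        simp only [hsn, Set.mem_sep_iff, Set.mem_setOf_eq]
        tauto
      rwa [heq] at this
    -- bound on sm
    have hsm_le : sm.ncard ≤ k * (k + d) := by
      rcases Set.eq_empty_or_nonempty sm with hsmE | ⟨v₀, hv₀⟩
      · rw [hsmE, Set.ncard_empty]; exact Nat.zero_le _
      · -- all elements of sm share v₀'s down-set
        have hDall : ∀ u ∈ sm, Ds u = Ds v₀ := by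
          rintro u ⟨huS, humax⟩
          rcases eq_or_ne u v₀ with rfl | hne
          · rfl
          · rcases hs'chain u huS v₀ hv₀.1 with (h | ⟨_, _, hD, _⟩) | (h | ⟨_, _, hD, _⟩)
            · exact absurd (humax v₀ h) hne.symm
            · exact hD
            · exact absurd (hv₀.2 u h) hne
            · exact hD.symm
        have hsub : sm ⊆ ⋃ w ∈ Ds v₀, G.neighborSet w := by
          rintro u hu
          obtain ⟨huS, humax⟩ := hu
          have hdeg : d < gdeg G u := hAhigh u (hs'A u huS) humax
          obtain ⟨w, hw, hadj⟩ := hdown_nbr u humax hdeg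
          rw [hDall u ⟨huS, humax⟩] at hw
          exact Set.mem_biUnion hw hadj
        calc sm.ncard ≤ (⋃ w ∈ Ds v₀, G.neighborSet w).ncard :=
              Set.ncard_le_ncard hsub (Set.toFinite _)
          _ ≤ (Ds v₀).ncard * (k + d) := by
              refine aux_ncard_biUnion_le' (k + d) _ (fun w => Set.toFinite _) _
                (Set.toFinite _) ?_
              intro w _
              exact hΔ w
          _ ≤ k * (k + d) := Nat.mul_le_mul_right _ (hDsmall v₀)
    calc s.ncard = s'.ncard := hcard
      _ ≤ sn.ncard + sm.ncard := by rw [hsplit]; exact Set.ncard_union_le _ _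
      _ ≤ k + k * (k + d) := add_le_add hsn_le hsm_le
      _ = k * (k + d + 1) := by ring
end

section
/- Let G be a finite simple graph and ≤ an elimination order to degree d for G of d-height at most k, with non-maximal subgraph H. Then every vertex of G of degree greater than k+d belongs to V(H). -/
open SimpleGraph Set

variable {V : Type*}

/-- If `le` is an elimination order to degree `d` for `G` of `d`-height at most `k`,
then every vertex of degree greater than `k + d` is non-maximal, i.e. belongs to the
non-maximal subgraph. -/
theorem highDeg_nonmaximal {V : Type*} [Fintype V] (G : SimpleGraph V) (d k : ℕ)
    (le : V → V → Prop) (hle : IsElimOrderToDeg G d le) (hht : DHeightLE le k) :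
    ∀ v : V, k + d < gdeg G v → ¬ IsLeMaximal le v := by
  intro v hdeg hmax
  obtain ⟨hto, hS⟩ := hle
  set B : Set V := {u | u ∈ G.neighborSet v ∧ le u v} with hB
  have hchain : IsChainOf le B := fun a ha b hb => hto.downLinear v a b ha.2 hb.2
  have hBk : B.ncard ≤ k := by
    have h := hht B hchain
    have heq : {u ∈ B | ¬ IsLeMaximal le u} = B := by
      ext u
      refine ⟨fun h => h.1, fun h => ⟨h, fun hm => ?_⟩⟩
      exact (h.1 : G.Adj v u).ne (hm v h.2)
    rwa [heq] at h
  have hSd : (Sset G le v).ncard ≤ d := by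
    rcases hS v with h0 | ⟨_, hd, _⟩
    · simp [h0]
    · exact hd
  have hsub : G.neighborSet v ⊆ B ∪ Sset G le v := by
    intro u hu
    by_cases h1 : le u v
    · exact Or.inl ⟨hu, h1⟩
    by_cases h2 : le v u
    · exact absurd (hmax u h2) (hu : G.Adj v u).ne.symm
    · exact Or.inr ⟨(hu : G.Adj v u).symm, h1, h2⟩
  have : gdeg G v ≤ k + d := by
    calc gdeg G v ≤ (B ∪ Sset G le v).ncard :=
          Set.ncard_le_ncard hsub (Set.toFinite _)
      _ ≤ B.ncard + (Sset G le v).ncard := Set.ncard_union_le _ _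
      _ ≤ k + d := Nat.add_le_add hBk hSd
  omega
end
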